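/- Define S_0(v_𝐢) = Q_{c_1(𝐢)} v_𝐢, θ = S_{n−1}⋯S_1, and T_0 = T_1⁻¹ ⋯ T_{n−1}⁻¹ θ S_0. Then T_0 satisfies the cyclotomic relation (T_0 − Q_1)(T_0 − Q_2)⋯(T_0 − Q_m) = 0 on V^{⊗n}. -/

import Mathlib

namespace SSW

/-- Tuples indexing basis vectors of the `n`-fold tensor power of a space with
basis indexed by `Fin N`. -/
abbrev Tup (N n : ℕ) := Fin n → Fin N

/-- The `n`-fold tensor power `V^{⊗ n}` of the superspace `V` with homogeneous basis
`v_1, …, v_N`, realised as the free `K`-module on the set of index tuples. -/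
abbrev Ten (K : Type*) [Semiring K] (N n : ℕ) : Type _ := Tup N n →₀ K

/-- The basis vector `v_𝐢 = v_{i_1} ⊗ ⋯ ⊗ v_{i_n}`. -/
noncomputable def bv (K : Type*) [Semiring K] {N n : ℕ} (i : Tup N n) : Ten K N n :=
  Finsupp.single i 1

/-- The position (0-indexed) of the `a`-th tensor factor (1-indexed), clamped. -/
def fpos (n : ℕ) (hn : 0 < n) (a : ℕ) : Fin n := ⟨min (a - 1) (n - 1), by omega⟩

/-- The `a`-th entry (1-indexed) `i_a` of a tuple `𝐢`. -/
def ent {N n : ℕ} (hn : 0 < n) (i : Tup N n) (a : ℕ) : Fin N := i (fpos n hn a)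

/-- The tuple `𝐢 s_a`, with entries `i_a` and `i_{a+1}` interchanged. -/
def swapT {N n : ℕ} (hn : 0 < n) (a : ℕ) (i : Tup N n) : Tup N n :=
  i ∘ Equiv.swap (fpos n hn a) (fpos n hn (a + 1))

/-- `(-1)^x` for a parity `x ∈ ℤ/2`. -/
def sgn (K : Type*) [Ring K] (x : ZMod 2) : K := if x = 1 then -1 else 1

/-- The parity function of `ℂ^{k|ℓ}`: `ī = 0` for `i ≤ k`, `ī = 1` for `i > k`. -/
def hookPar (k l : ℕ) : Fin (k + l) → ZMod 2 := fun i => if (i : ℕ) < k then 0 else 1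

/-- The sign permutation operator `s_a` on `V^{⊗n}` (paper convention: `1 ≤ a ≤ n-1`). -/
noncomputable def sOp (K : Type*) [Field K] {N n : ℕ} (hn : 0 < n)
    (par : Fin N → ZMod 2) (a : ℕ) : Module.End K (Ten K N n) :=
  Finsupp.lift (Ten K N n) K (Tup N n) fun i =>
    if ent hn i a = ent hn i (a + 1) then
      sgn K (par (ent hn i a)) • bv K i
    else
      sgn K (par (ent hn i a) * par (ent hn i (a + 1))) • bv K (swapT hn a i)

/-- The super Hecke operator `T_a` on `V^{⊗n}` (paper convention: `1 ≤ a ≤ n-1`). -/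
noncomputable def TOp (K : Type*) [Field K] (q : K) {N n : ℕ} (hn : 0 < n)
    (par : Fin N → ZMod 2) (a : ℕ) : Module.End K (Ten K N n) :=
  Finsupp.lift (Ten K N n) K (Tup N n) fun i =>
    if ent hn i a < ent hn i (a + 1) then
      (q - q⁻¹) • bv K i +
        sgn K (par (ent hn i a) * par (ent hn i (a + 1))) • bv K (swapT hn a i)
    else if ent hn i a = ent hn i (a + 1) then
      (((q - q⁻¹) + sgn K (par (ent hn i a)) * (q + q⁻¹)) / 2) • bv K i
    else
      sgn K (par (ent hn i a) * par (ent hn i (a + 1))) • bv K (swapT hn a i)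

/-- The inverse `T_a⁻¹ = T_a - (q - q⁻¹)` of the Hecke operator `T_a`. -/
noncomputable def Tinv (K : Type*) [Field K] (q : K) {N n : ℕ} (hn : 0 < n)
    (par : Fin N → ZMod 2) (a : ℕ) : Module.End K (Ten K N n) :=
  TOp K q hn par a - (q - q⁻¹) • 1

/-- The operator `S_a`: acts as `T_a` when the colors of the `a`-th and `(a+1)`-th
factors agree, and as the signed swap `s_a` otherwise. -/
noncomputable def SOp (K : Type*) [Field K] (q : K) {N n m : ℕ} (hn : 0 < n)
    (par : Fin N → ZMod 2) (col : Fin N → Fin m) (a : ℕ) : Module.End K (Ten K N n) :=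
  Finsupp.lift (Ten K N n) K (Tup N n) fun i =>
    if col (ent hn i a) = col (ent hn i (a + 1)) then TOp K q hn par a (bv K i)
    else sOp K hn par a (bv K i)

/-- The inverse `S_a⁻¹` of `S_a`. -/
noncomputable def Sinv (K : Type*) [Field K] (q : K) {N n m : ℕ} (hn : 0 < n)
    (par : Fin N → ZMod 2) (col : Fin N → Fin m) (a : ℕ) : Module.End K (Ten K N n) :=
  Finsupp.lift (Ten K N n) K (Tup N n) fun i =>
    if col (ent hn i a) = col (ent hn i (a + 1)) then Tinv K q hn par a (bv K i)
    else sOp K hn par a (bv K i)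

/-- The operator `S_0 : v_𝐢 ↦ Q_{c_1(𝐢)} v_𝐢`. -/
noncomputable def S0op (K : Type*) [Field K] {N n m : ℕ} (hn : 0 < n)
    (col : Fin N → Fin m) (Q : Fin m → K) : Module.End K (Ten K N n) :=
  Finsupp.lift (Ten K N n) K (Tup N n) fun i => Q (col (ent hn i 1)) • bv K i

/-- `θ = S_{n-1} ⋯ S_1`. -/
noncomputable def thetaOp (K : Type*) [Field K] (q : K) {N n m : ℕ} (hn : 0 < n)
    (par : Fin N → ZMod 2) (col : Fin N → Fin m) : Module.End K (Ten K N n) :=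
  (((List.range (n - 1)).reverse).map fun t => SOp K q hn par col (t + 1)).prod

/-- `T_0 = T_1⁻¹ ⋯ T_{n-1}⁻¹ θ S_0`. -/
noncomputable def T0op (K : Type*) [Field K] (q : K) {N n m : ℕ} (hn : 0 < n)
    (par : Fin N → ZMod 2) (col : Fin N → Fin m) (Q : Fin m → K) :
    Module.End K (Ten K N n) :=
  (((List.range (n - 1)).map fun t => Tinv K q hn par (t + 1)).prod) *
    thetaOp K q hn par col * S0op K hn col Q


section Aux

variable {K : Type*} [Field K] {N n m : ℕ}

lemma lift_bv (f : Tup N n → Ten K N n) (i : Tup N n) :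
    Finsupp.lift (Ten K N n) K (Tup N n) f (bv K i) = f i := by
  rw [bv, Finsupp.lift_apply, Finsupp.sum_single_index (by simp), one_smul]

variable (hn : 0 < n)

lemma fpos_val {b : ℕ} (hb1 : 1 ≤ b) (hbn : b < n) : (fpos n hn b : ℕ) = b - 1 := by
  simp only [fpos]; omega

lemma fpos_val1 {b : ℕ} (hbn : b < n) : (fpos n hn (b + 1) : ℕ) = b := by
  simp only [fpos]; omega

lemma ent_swap_b {b : ℕ} (i : Tup N n) :
    ent hn (swapT hn b i) b = ent hn i (b + 1) := by
  simp only [ent, swapT, Function.comp_apply, Equiv.swap_apply_left]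

lemma ent_swap_b1 {b : ℕ} (i : Tup N n) :
    ent hn (swapT hn b i) (b + 1) = ent hn i b := by
  simp only [ent, swapT, Function.comp_apply, Equiv.swap_apply_right]

lemma ent_swap_lt {b x : ℕ} (hb1 : 1 ≤ b) (hbn : b < n) (hx1 : 1 ≤ x) (hxb : x < b)
    (i : Tup N n) : ent hn (swapT hn b i) x = ent hn i x := by
  simp only [ent, swapT, Function.comp_apply]
  rw [Equiv.swap_apply_of_ne_of_ne]
  · exact Fin.ne_of_val_ne (by rw [fpos_val hn hx1 (by omega), fpos_val hn hb1 hbn]; omega)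
  · exact Fin.ne_of_val_ne (by rw [fpos_val hn hx1 (by omega), fpos_val1 hn hbn]; omega)

lemma swap_swap {b : ℕ} (i : Tup N n) : swapT hn b (swapT hn b i) = i := by
  funext p
  simp [swapT, Equiv.swap_apply_self]

lemma sgn_mul_self (x : ZMod 2) : sgn K x * sgn K x = 1 := by
  have hx : x = 0 ∨ x = 1 := by fin_cases x; exacts [Or.inl rfl, Or.inr rfl]
  rcases hx with h | h <;> simp [sgn, h]

variable (q : K) (par : Fin N → ZMod 2) (col : Fin N → Fin m)

lemma sOp_bv (a : ℕ) (i : Tup N n) :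
    sOp K hn par a (bv K i) =
      if ent hn i a = ent hn i (a + 1) then sgn K (par (ent hn i a)) • bv K i
      else sgn K (par (ent hn i a) * par (ent hn i (a + 1))) • bv K (swapT hn a i) :=
  lift_bv _ _

lemma TOp_bv (a : ℕ) (i : Tup N n) :
    TOp K q hn par a (bv K i) =
      if ent hn i a < ent hn i (a + 1) then
        (q - q⁻¹) • bv K i +
          sgn K (par (ent hn i a) * par (ent hn i (a + 1))) • bv K (swapT hn a i)
      else if ent hn i a = ent hn i (a + 1) then
        (((q - q⁻¹) + sgn K (par (ent hn i a)) * (q + q⁻¹)) / 2) • bv K i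
      else
        sgn K (par (ent hn i a) * par (ent hn i (a + 1))) • bv K (swapT hn a i) :=
  lift_bv _ _

lemma SOp_bv (a : ℕ) (i : Tup N n) :
    SOp K q hn par col a (bv K i) =
      if col (ent hn i a) = col (ent hn i (a + 1)) then TOp K q hn par a (bv K i)
      else sOp K hn par a (bv K i) :=
  lift_bv _ _

lemma S0_bv (Q : Fin m → K) (i : Tup N n) :
    S0op K hn col Q (bv K i) = Q (col (ent hn i 1)) • bv K i :=
  lift_bv _ _

lemma Tinv_apply (a : ℕ) (x : Ten K N n) :
    Tinv K q hn par a x = TOp K q hn par a x - (q - q⁻¹) • x := by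
  simp [Tinv, LinearMap.sub_apply, LinearMap.smul_apply]

end Aux


section Aux2

variable {K : Type*} [Field K] [CharZero K] {N n m : ℕ} (hn : 0 < n)
variable (q : K) (par : Fin N → ZMod 2)

lemma TOp_bv_lt {a : ℕ} {i : Tup N n} (h : ent hn i a < ent hn i (a + 1)) :
    TOp K q hn par a (bv K i) = (q - q⁻¹) • bv K i +
      sgn K (par (ent hn i a) * par (ent hn i (a + 1))) • bv K (swapT hn a i) := by
  rw [TOp_bv, if_pos h]

lemma TOp_bv_eq {a : ℕ} {i : Tup N n} (h : ent hn i a = ent hn i (a + 1)) :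
    TOp K q hn par a (bv K i) =
      (((q - q⁻¹) + sgn K (par (ent hn i a)) * (q + q⁻¹)) / 2) • bv K i := by
  rw [TOp_bv, if_neg (by simp [h]), if_pos h]

lemma TOp_bv_gt {a : ℕ} {i : Tup N n} (h : ent hn i (a + 1) < ent hn i a) :
    TOp K q hn par a (bv K i) =
      sgn K (par (ent hn i a) * par (ent hn i (a + 1))) • bv K (swapT hn a i) := by
  rw [TOp_bv, if_neg (by omega), if_neg (by exact fun he => absurd he (by intro he; rw [he] at h; exact lt_irrefl _ h))]

lemma Tinv_bv_of_lt {a : ℕ} {k : Tup N n} (h : ent hn k a < ent hn k (a + 1)) :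
    Tinv K q hn par a (bv K k) =
      sgn K (par (ent hn k a) * par (ent hn k (a + 1))) • bv K (swapT hn a k) := by
  rw [Tinv_apply, TOp_bv_lt hn q par h, add_sub_cancel_left]

lemma TOp_bv_mem_pair (a : ℕ) (i : Tup N n) :
    TOp K q hn par a (bv K i) ∈
      Submodule.span K {bv K i, bv K (swapT hn a i)} := by
  have h1 : bv K i ∈ Submodule.span K {bv K i, bv K (swapT hn a i)} :=
    Submodule.subset_span (Set.mem_insert _ _)
  have h2 : bv K (swapT hn a i) ∈ Submodule.span K {bv K i, bv K (swapT hn a i)} :=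
    Submodule.subset_span (Set.mem_insert_of_mem _ rfl)
  rw [TOp_bv]
  split_ifs <;>
    first
      | exact Submodule.add_mem _ (Submodule.smul_mem _ _ h1) (Submodule.smul_mem _ _ h2)
      | exact Submodule.smul_mem _ _ h1
      | exact Submodule.smul_mem _ _ h2

lemma Tinv_bv_mem_pair (a : ℕ) (i : Tup N n) :
    Tinv K q hn par a (bv K i) ∈
      Submodule.span K {bv K i, bv K (swapT hn a i)} := by
  rw [Tinv_apply]
  exact Submodule.sub_mem _ (TOp_bv_mem_pair hn q par a i)
    (Submodule.smul_mem _ _ (Submodule.subset_span (Set.mem_insert _ _)))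

lemma Tinv_bv_of_gt {a : ℕ} {k : Tup N n} (h : ent hn k (a + 1) < ent hn k a) :
    Tinv K q hn par a (bv K k) =
      sgn K (par (ent hn k a) * par (ent hn k (a + 1))) • bv K (swapT hn a k) -
        (q - q⁻¹) • bv K k := by
  rw [Tinv_apply, TOp_bv_gt hn q par h]

lemma Tinv_TOp (hq : q ≠ 0) {b : ℕ} (hb1 : 1 ≤ b) (hbn : b < n) (i : Tup N n) :
    Tinv K q hn par b (TOp K q hn par b (bv K i)) = bv K i := by
  have hsw : swapT hn b (swapT hn b i) = i := swap_swap hn i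
  have hb : ent hn (swapT hn b i) b = ent hn i (b + 1) := ent_swap_b hn i
  have hb1' : ent hn (swapT hn b i) (b + 1) = ent hn i b := ent_swap_b1 hn i
  set e0 := ent hn i b with he0
  set e1 := ent hn i (b + 1) with he1
  set ee := sgn K (par e0 * par e1) with hee
  have heesq : ee * ee = 1 := sgn_mul_self _
  rcases lt_trichotomy e0 e1 with h | h | h
  · have h' : ent hn (swapT hn b i) (b + 1) < ent hn (swapT hn b i) b := by
      rw [hb, hb1']; exact h
    have t1 : Tinv K q hn par b (bv K i) = ee • bv K (swapT hn b i) :=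
      Tinv_bv_of_lt hn q par h
    have t2 : Tinv K q hn par b (bv K (swapT hn b i)) =
        ee • bv K i - (q - q⁻¹) • bv K (swapT hn b i) := by
      rw [Tinv_bv_of_gt hn q par h', hsw, hb, hb1', mul_comm (par e1) (par e0)]
    rw [TOp_bv_lt hn q par h, map_add, map_smul, map_smul, ← he0, ← he1, ← hee, t1, t2,
      smul_sub, smul_smul, smul_smul, heesq, one_smul, smul_smul, mul_comm (q - q⁻¹) ee]
    abel
  · have hs : sgn K (par e0) * sgn K (par e0) = 1 := sgn_mul_self _
    have hqq : q * q⁻¹ = 1 := mul_inv_cancel₀ hq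
    have key : ((q - q⁻¹) + sgn K (par e0) * (q + q⁻¹)) / 2 *
        (((q - q⁻¹) + sgn K (par e0) * (q + q⁻¹)) / 2 - (q - q⁻¹)) = 1 := by
      have : sgn K (par e0) = 1 ∨ sgn K (par e0) = -1 := by
        unfold sgn; split <;> simp
      rcases this with hg | hg <;> rw [hg] <;> field_simp <;> ring
    rw [TOp_bv_eq hn q par h, map_smul, Tinv_apply, TOp_bv_eq hn q par h, ← he0,
      smul_sub, smul_smul, smul_smul, ← sub_smul, ← mul_sub, key, one_smul]
  · have h' : ent hn (swapT hn b i) b < ent hn (swapT hn b i) (b + 1) := by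
      rw [hb, hb1']; exact h
    have t2 : Tinv K q hn par b (bv K (swapT hn b i)) = ee • bv K i := by
      rw [Tinv_bv_of_lt hn q par h', hsw, hb, hb1', mul_comm (par e1) (par e0)]
    rw [TOp_bv_gt hn q par h, map_smul, ← he0, ← he1, ← hee, t2, smul_smul, heesq, one_smul]

end Aux2


section Aux3

set_option linter.unusedSectionVars false

variable {K : Type*} [Field K] [CharZero K] {N n m : ℕ} (hn : 0 < n)
variable (q : K) (par : Fin N → ZMod 2) (col : Fin N → Fin m)

/-- Generators: basis vectors agreeing with `i` strictly before position `b`, whose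
`b`-th entry has strictly larger color than that of `i`. -/
def bvset (b : ℕ) (i : Tup N n) : Set (Ten K N n) :=
  {y | ∃ j : Tup N n, y = bv K j ∧ (∀ x, 1 ≤ x → x < b → ent hn j x = ent hn i x) ∧
      col (ent hn i b) < col (ent hn j b)}

noncomputable def Espan (b : ℕ) (i : Tup N n) : Submodule K (Ten K N n) :=
  Submodule.span K (bvset hn col b i)

lemma L_T (hcol : Monotone col) {b : ℕ} (hb1 : 1 ≤ b) (hbn : b < n) {k i : Tup N n}
    (hpre : ∀ x, 1 ≤ x → x < b → ent hn k x = ent hn i x)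
    (hck : col (ent hn i b) < col (ent hn k (b + 1))) :
    Tinv K q hn par b (bv K k) ∈ Espan hn col b i := by
  have hmem2 : bv K (swapT hn b k) ∈ bvset hn col b i := by
    refine ⟨swapT hn b k, rfl, fun x hx1 hxb => ?_, ?_⟩
    · rw [ent_swap_lt hn hb1 hbn hx1 hxb]; exact hpre x hx1 hxb
    · rw [ent_swap_b]; exact hck
  by_cases hc : col (ent hn i b) < col (ent hn k b)
  · have hmem1 : bv K k ∈ bvset hn col b i := ⟨k, rfl, hpre, hc⟩
    have hsub : ({bv K k, bv K (swapT hn b k)} : Set (Ten K N n)) ⊆ bvset hn col b i := by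
      rintro y (rfl | rfl)
      · exact hmem1
      · exact hmem2
    exact Submodule.span_le.mpr (hsub.trans Submodule.subset_span)
      (Tinv_bv_mem_pair hn q par b k)
  · push_neg at hc
    have hlt : ent hn k b < ent hn k (b + 1) :=
      hcol.reflect_lt (lt_of_le_of_lt hc hck)
    rw [Tinv_bv_of_lt hn q par hlt]
    exact Submodule.smul_mem _ _ (Submodule.subset_span hmem2)

/-- The partial products `D_c = T_{n-c}⁻¹ ⋯ T_{n-1}⁻¹ S_{n-1} ⋯ S_{n-c}`. -/
noncomputable def Dop (c : ℕ) : Module.End K (Ten K N n) :=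
  (((List.range c).reverse.map fun t => Tinv K q hn par (n - 1 - t)).prod) *
    (((List.range c).map fun t => SOp K q hn par col (n - 1 - t)).prod)

lemma Dop_succ (c : ℕ) :
    Dop hn q par col (c + 1) =
      Tinv K q hn par (n - 1 - c) * Dop hn q par col c * SOp K q hn par col (n - 1 - c) := by
  unfold Dop
  rw [List.range_succ, List.reverse_append, List.map_append, List.map_append,
    List.prod_append, List.prod_append]
  simp only [List.reverse_singleton, List.map_cons, List.map_nil, List.prod_cons,
    List.prod_nil, mul_one, one_mul]
  rw [mul_assoc, mul_assoc, mul_assoc]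

lemma Dop_key (hq : q ≠ 0) (hcol : Monotone col) :
    ∀ c, c ≤ n - 1 → ∀ i : Tup N n,
      Dop hn q par col c (bv K i) - bv K i ∈ Espan hn col (n - c) i := by
  intro c
  induction c with
  | zero =>
    intro _ i
    simp only [Dop, List.range_zero, List.reverse_nil, List.map_nil, List.prod_nil, one_mul,
      Module.End.one_apply, sub_self]
    exact Submodule.zero_mem _
  | succ c IH =>
    intro hc i
    have hc' : c ≤ n - 1 := by omega
    set b : ℕ := n - 1 - c with hbdef
    have hb1 : 1 ≤ b := by omega
    have hbn : b < n := by omega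
    have hnc : n - (c + 1) = b := by omega
    have hnc' : n - c = b + 1 := by omega
    rw [hnc, Dop_succ, Module.End.mul_apply, Module.End.mul_apply]
    set i' := swapT hn b i with hi'
    have hswsw : swapT hn b i' = i := swap_swap hn i
    have hib : ent hn i' b = ent hn i (b + 1) := ent_swap_b hn i
    have hib1 : ent hn i' (b + 1) = ent hn i b := ent_swap_b1 hn i
    -- error terms from `Dop c` land (after `Tinv b`) in `Espan b i`
    have herr' : ∀ z ∈ Espan hn col (b + 1) i', Tinv K q hn par b z ∈ Espan hn col b i := by
      intro z hz
      refine Submodule.span_induction (fun y hy => ?_) (by rw [map_zero]; exact Submodule.zero_mem _)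
        (fun x y _ _ hx hy => by rw [map_add]; exact Submodule.add_mem _ hx hy)
        (fun a x _ hx => by rw [map_smul]; exact Submodule.smul_mem _ _ hx) hz
      obtain ⟨j, rfl, hjpre, hjcol⟩ := hy
      refine L_T hn q par col hcol hb1 hbn (fun x hx1 hxb => ?_) ?_
      · rw [hjpre x hx1 (by omega), hi', ent_swap_lt hn hb1 hbn hx1 hxb]
      · rw [hib1] at hjcol; exact hjcol
    have herr : col (ent hn i b) = col (ent hn i (b + 1)) →
        ∀ z ∈ Espan hn col (b + 1) i, Tinv K q hn par b z ∈ Espan hn col b i := by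
      intro hcc z hz
      refine Submodule.span_induction (fun y hy => ?_) (by rw [map_zero]; exact Submodule.zero_mem _)
        (fun x y _ _ hx hy => by rw [map_add]; exact Submodule.add_mem _ hx hy)
        (fun a x _ hx => by rw [map_smul]; exact Submodule.smul_mem _ _ hx) hz
      obtain ⟨j, rfl, hjpre, hjcol⟩ := hy
      refine L_T hn q par col hcol hb1 hbn (fun x hx1 hxb => hjpre x hx1 (by omega)) ?_
      rw [hcc]; exact hjcol
    rw [SOp_bv]
    by_cases hcc : col (ent hn i b) = col (ent hn i (b + 1))
    · rw [if_pos hcc]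
      -- E := Dop c (TOp b (bv i)) − TOp b (bv i) lies in the sup of the two error spans
      have hEmem : Dop hn q par col c (TOp K q hn par b (bv K i)) - TOp K q hn par b (bv K i)
          ∈ Espan hn col (b + 1) i ⊔ Espan hn col (b + 1) i' := by
        have hpair := TOp_bv_mem_pair hn q par b i
        refine Submodule.span_induction (fun y hy => ?_) ?_ ?_ ?_ hpair
        · rcases hy with rfl | rfl
          · exact Submodule.mem_sup_left (by rw [← hnc']; exact IH hc' i)
          · exact Submodule.mem_sup_right (by rw [← hnc']; exact IH hc' i')
        · simp only [map_zero, sub_zero]; exact Submodule.zero_mem _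
        · intro x y _ _ hx hy
          have : Dop hn q par col c (x + y) - (x + y) =
              (Dop hn q par col c x - x) + (Dop hn q par col c y - y) := by
            rw [map_add]; abel
          rw [this]; exact Submodule.add_mem _ hx hy
        · intro a x _ hx
          have : Dop hn q par col c (a • x) - a • x = a • (Dop hn q par col c x - x) := by
            rw [map_smul, smul_sub]
          rw [this]; exact Submodule.smul_mem _ _ hx
      obtain ⟨y, hy, z, hz, hyz⟩ := Submodule.mem_sup.mp hEmem
      have hsplit : Dop hn q par col c (TOp K q hn par b (bv K i)) =
          TOp K q hn par b (bv K i) + (y + z) := by rw [hyz]; abel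
      rw [hsplit, map_add, Tinv_TOp hn q par hq hb1 hbn, map_add]
      have : bv K i + (Tinv K q hn par b y + Tinv K q hn par b z) - bv K i =
          Tinv K q hn par b y + Tinv K q hn par b z := by abel
      rw [this]
      exact Submodule.add_mem _ (herr hcc y hy) (herr' z hz)
    · rw [if_neg hcc]
      have hne : ent hn i b ≠ ent hn i (b + 1) := fun he => hcc (by rw [he])
      rw [sOp_bv, if_neg hne]
      set ee := sgn K (par (ent hn i b) * par (ent hn i (b + 1))) with heedef
      have heesq : ee * ee = 1 := sgn_mul_self _
      rw [map_smul, map_smul]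
      have hIH' : Dop hn q par col c (bv K i') - bv K i' ∈ Espan hn col (b + 1) i' := by
        rw [← hnc']; exact IH hc' i'
      have hsplit : Dop hn q par col c (bv K i') =
          bv K i' + (Dop hn q par col c (bv K i') - bv K i') := by abel
      rw [hsplit, map_add, smul_add]
      have hErr : ee • Tinv K q hn par b (Dop hn q par col c (bv K i') - bv K i')
          ∈ Espan hn col b i :=
        Submodule.smul_mem _ _ (herr' _ hIH')
      rcases lt_or_gt_of_ne (fun he => hcc he : col (ent hn i b) ≠ col (ent hn i (b + 1)))
        with hlt | hgt
      · -- col(i_b) < col(i_{b+1}) : main term gives bv i plus an extra generator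
        have hent : ent hn i b < ent hn i (b + 1) := hcol.reflect_lt hlt
        have hent' : ent hn i' (b + 1) < ent hn i' b := by rw [hib, hib1]; exact hent
        have ht : Tinv K q hn par b (bv K i') =
            ee • bv K i - (q - q⁻¹) • bv K i' := by
          rw [Tinv_bv_of_gt hn q par hent', hswsw, hib, hib1,
            mul_comm (par (ent hn i (b + 1))) (par (ent hn i b))]
        have hi'mem : bv K i' ∈ bvset hn col b i :=
          ⟨i', rfl, fun x hx1 hxb => ent_swap_lt hn hb1 hbn hx1 hxb i, by rw [hib]; exact hlt⟩
        have hre : ee • Tinv K q hn par b (bv K i') +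
            ee • Tinv K q hn par b (Dop hn q par col c (bv K i') - bv K i') - bv K i =
            (-(ee * (q - q⁻¹))) • bv K i' +
              ee • Tinv K q hn par b (Dop hn q par col c (bv K i') - bv K i') := by
          rw [ht, smul_sub, smul_smul, smul_smul, heesq, one_smul, neg_smul]
          abel
        rw [hre]
        exact Submodule.add_mem _
          (Submodule.smul_mem _ _ (Submodule.subset_span hi'mem)) hErr
      · -- col(i_b) > col(i_{b+1}) : main term is exactly bv i
        have hent : ent hn i (b + 1) < ent hn i b := hcol.reflect_lt hgt
        have hent' : ent hn i' b < ent hn i' (b + 1) := by rw [hib, hib1]; exact hent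
        have ht : Tinv K q hn par b (bv K i') = ee • bv K i := by
          rw [Tinv_bv_of_lt hn q par hent', hswsw, hib, hib1,
            mul_comm (par (ent hn i (b + 1))) (par (ent hn i b))]
        have hre : ee • Tinv K q hn par b (bv K i') +
            ee • Tinv K q hn par b (Dop hn q par col c (bv K i') - bv K i') - bv K i =
            ee • Tinv K q hn par b (Dop hn q par col c (bv K i') - bv K i') := by
          rw [ht, smul_smul, heesq, one_smul]
          abel
        rw [hre]
        exact hErr

end Aux3


section Aux4

set_option linter.unusedSectionVars false

lemma list_rev_map {α : Type*} (f : ℕ → α) (k : ℕ) :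
    (List.range k).reverse.map f = (List.range k).map fun t => f (k - 1 - t) := by
  conv_lhs => rw [List.range_eq_range', List.reverse_range']
  rw [List.map_map]
  exact List.map_congr_left fun t ht => by simp [Function.comp]

variable {K : Type*} [Field K] [CharZero K] {N n m : ℕ} (hn : 0 < n)
variable (q : K) (par : Fin N → ZMod 2) (col : Fin N → Fin m) (Q : Fin m → K)

lemma T0_eq_Dop : T0op K q hn par col Q = Dop hn q par col (n - 1) * S0op K hn col Q := by
  have hT : ((List.range (n - 1)).reverse.map fun t => Tinv K q hn par (n - 1 - t)) =
      (List.range (n - 1)).map fun t => Tinv K q hn par (t + 1) := by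
    rw [list_rev_map]
    exact List.map_congr_left fun t ht => by
      rw [List.mem_range] at ht
      congr 1
      omega
  have hS : ((List.range (n - 1)).reverse.map fun t => SOp K q hn par col (t + 1)) =
      (List.range (n - 1)).map fun t => SOp K q hn par col (n - 1 - t) := by
    rw [list_rev_map]
    exact List.map_congr_left fun t ht => by
      rw [List.mem_range] at ht
      congr 1
      omega
  unfold T0op Dop thetaOp
  rw [hT, hS]

noncomputable def Ufil (k : ℕ) : Submodule K (Ten K N n) :=
  Finsupp.supported K K {j : Tup N n | k ≤ (col (ent hn j 1) : ℕ)}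

lemma Ufil_mono {k l : ℕ} (h : k ≤ l) :
    (Ufil hn col l : Submodule K (Ten K N n)) ≤ Ufil hn col k :=
  Finsupp.supported_mono fun _ hj => le_trans h hj

lemma Espan_le_Ufil (i : Tup N n) :
    Espan hn col 1 i ≤ (Ufil hn col ((col (ent hn i 1) : ℕ) + 1) : Submodule K (Ten K N n)) := by
  rw [Espan, Submodule.span_le]
  rintro y ⟨j, rfl, -, hjcol⟩
  exact Finsupp.single_mem_supported K 1 (by simpa [Nat.succ_le_iff] using hjcol)

lemma T0_key (hq : q ≠ 0) (hcol : Monotone col) (i : Tup N n) :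
    T0op K q hn par col Q (bv K i) - Q (col (ent hn i 1)) • bv K i ∈
      Ufil hn col ((col (ent hn i 1) : ℕ) + 1) := by
  rw [T0_eq_Dop, Module.End.mul_apply, S0_bv, map_smul, ← smul_sub]
  refine Submodule.smul_mem _ _ (Espan_le_Ufil hn col i ?_)
  have hD := Dop_key hn q par col hq hcol (n - 1) le_rfl i
  rwa [show n - (n - 1) = 1 by omega] at hD

lemma A_step {A : Module.End K (Ten K N n)}
    (hkey : ∀ i : Tup N n, A (bv K i) - Q (col (ent hn i 1)) • bv K i ∈
      Ufil hn col ((col (ent hn i 1) : ℕ) + 1))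
    {k : ℕ} (hk : k < m) {x : Ten K N n} (hx : x ∈ Ufil hn col k) :
    (A - Q ⟨k, hk⟩ • 1) x ∈ Ufil hn col (k + 1) := by
  rw [Ufil, Finsupp.supported_eq_span_single] at hx
  refine Submodule.span_induction (fun y hy => ?_)
    (by rw [map_zero]; exact Submodule.zero_mem _)
    (fun a b _ _ ha hb => by rw [map_add]; exact Submodule.add_mem _ ha hb)
    (fun a y _ hy => by rw [map_smul]; exact Submodule.smul_mem _ _ hy) hx
  obtain ⟨j, hj, rfl⟩ := hy
  have hj' : k ≤ (col (ent hn j 1) : ℕ) := hj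
  have hsplit : (A - Q ⟨k, hk⟩ • 1) (Finsupp.single j 1) =
      (A (bv K j) - Q (col (ent hn j 1)) • bv K j) +
        (Q (col (ent hn j 1)) - Q ⟨k, hk⟩) • bv K j := by
    simp only [LinearMap.sub_apply, LinearMap.smul_apply, Module.End.one_apply, sub_smul, bv]
    abel
  rw [hsplit]
  refine Submodule.add_mem _ (Ufil_mono hn col (by omega) (hkey j)) ?_
  rcases eq_or_lt_of_le hj' with he | hlt
  · have : (⟨k, hk⟩ : Fin m) = col (ent hn j 1) := Fin.ext he
    rw [← this, sub_self, zero_smul]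
    exact Submodule.zero_mem _
  · exact Submodule.smul_mem _ _ (Finsupp.single_mem_supported K 1 (by simpa using hlt))

lemma Ufil_top_eq_zero {x : Ten K N n} (hx : x ∈ Ufil hn col m) : x = 0 := by
  have hsub := (Finsupp.mem_supported K x).mp hx
  ext j
  by_contra hj
  have hmem : j ∈ x.support := Finsupp.mem_support_iff.mpr hj
  exact absurd (col (ent hn j 1)).isLt (not_lt.2 (hsub hmem))

lemma comm_aux {R : Type*} [Ring R] (a b c : R) (hb : ∀ z : R, Commute b z)
    (hc : ∀ z : R, Commute c z) : Commute (a - b) (a - c) :=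
  ((Commute.refl a).sub_right (hc a).symm).sub_left (hb _)

lemma smul_one_commute (x : K) (z : Module.End K (Ten K N n)) :
    Commute (x • (1 : Module.End K (Ten K N n))) z := by
  show _ * _ = _ * _
  rw [smul_mul_assoc, mul_smul_comm, one_mul, mul_one]

lemma sub_smul_one_commute (x y : K) (A : Module.End K (Ten K N n)) :
    Commute (A - x • 1) (A - y • 1) :=
  comm_aux A _ _ (fun z => smul_one_commute x z) (fun z => smul_one_commute y z)

lemma cyclo_general (A : Module.End K (Ten K N n))
    (hkey : ∀ i : Tup N n, A (bv K i) - Q (col (ent hn i 1)) • bv K i ∈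
      Ufil hn col ((col (ent hn i 1) : ℕ) + 1)) :
    (List.ofFn fun r : Fin m => A - Q r • (1 : Module.End K (Ten K N n))).prod = 0 := by
  set h : ℕ → Module.End K (Ten K N n) :=
    fun k => if hk : k < m then A - Q ⟨k, hk⟩ • 1 else 1 with hh
  have hR : ∀ k, k ≤ m → ∀ x : Ten K N n,
      (((List.range k).reverse.map h).prod) x ∈ Ufil hn col k := by
    intro k
    induction k with
    | zero =>
      intro _ x
      simp only [List.range_zero, List.reverse_nil, List.map_nil, List.prod_nil,
        Module.End.one_apply]
      exact (Finsupp.mem_supported K x).mpr fun j _ => Nat.zero_le _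
    | succ k IH =>
      intro hkm x
      rw [List.range_succ, List.reverse_append, List.reverse_singleton, List.singleton_append,
        List.map_cons, List.prod_cons, Module.End.mul_apply]
      have hk : k < m := hkm
      have hdk : h k = A - Q ⟨k, hk⟩ • 1 := dif_pos hk
      rw [hdk]
      exact A_step hn col Q hkey hk (IH (by omega) x)
  have hzero : (((List.range m).reverse.map h).prod) = 0 :=
    LinearMap.ext fun x => Ufil_top_eq_zero hn col (hR m le_rfl x)
  have hofn : (List.ofFn fun r : Fin m => A - Q r • (1 : Module.End K (Ten K N n))) =
      (List.range m).map h := by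
    have hfr : (List.finRange m).map Fin.val = List.range m :=
      List.ext_getElem (by simp) (by simp)
    rw [List.ofFn_eq_map, ← hfr, List.map_map]
    exact (List.map_congr_left fun r _ => by
      simp only [Function.comp_apply, hh, dif_pos r.isLt, Fin.eta]).symm
  have hrev : ((List.range m).map h).prod = (((List.range m).reverse.map h)).prod := by
    refine List.Perm.prod_eq' ?_ ?_
    · rw [List.map_reverse]
      exact (List.reverse_perm _).symm
    · refine List.pairwise_map.mpr ((List.pairwise_lt_range (n := m)).imp fun _ => ?_)
      simp only [hh]
      split_ifs
      · exact sub_smul_one_commute _ _ A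
      · exact Commute.one_right _
      · exact Commute.one_left _
      · exact Commute.one_left _
  rw [hofn, hrev, hzero]

end Aux4

/-- `T_0 = T_1⁻¹ ⋯ T_{n−1}⁻¹ θ S_0` satisfies the cyclotomic relation
`(T_0 − Q_1)(T_0 − Q_2)⋯(T_0 − Q_m) = 0` on `V^{⊗n}`. -/
theorem stmt11 (K : Type*) [Field K] [CharZero K] (q : K) (hq : q ≠ 0)
    {N n m : ℕ} (hn : 0 < n) (par : Fin N → ZMod 2)
    (col : Fin N → Fin m) (hcol : Monotone col) (Q : Fin m → K) :
    (List.ofFn fun r : Fin m =>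
      T0op K q hn par col Q - Q r • (1 : Module.End K (Ten K N n))).prod = 0 :=
  cyclo_general hn col Q (T0op K q hn par col Q)
    (fun i => T0_key hn q par col Q hq hcol i)

end SSW
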